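/- Let d ≥ 1 be an integer, p > d+1, and set K̄(ρ) = |ρ|^{d−1} max(1,|ρ|)^{−p} for ρ ∈ ℝ. Let E ⊆ ℝ be measurable and let s⁻ < s < s⁺ be reals such that χ_E is a.e. constant on (s⁻,s) and a.e. constant on (s,s⁺). Then ∫_{s⁻}^{s} ∫_{0}^{+∞} |χ_E(u) − χ_E(u+ρ)| K̄(ρ) dρ du + ∫_{s}^{s⁺} ∫_{−∞}^{0} |χ_E(u) − χ_E(u+ρ)| K̄(ρ) dρ du ≤ ∫_{−∞}^{+∞} |ρ| K̄(ρ) dρ; that is, the one-dimensional energy defect r̃(E,s) at the critical coupling J_c is nonnegative. -/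

import Mathlib

open MeasureTheory Filter
open scoped ENNReal

noncomputable section

/-- The rescaled one-dimensional kernel `K̄_τ(ρ) = |ρ|^{d−1} max(τ^{1/(p−d−1)}, |ρ|)^{−p}`. -/
def Kbar (d : ℕ) (p τ : ℝ) (ρ : ℝ) : ℝ :=
  |ρ| ^ ((d : ℝ) - 1) * (max (τ ^ (1 / (p - d - 1))) |ρ|) ^ (-p)

/-- The indicator function of a set of reals. -/
def ind (E : Set ℝ) : ℝ → ℝ := Set.indicator E fun _ => (1 : ℝ)

/-- `χ_E` is a.e. constant on `I`. -/
def AEConstOn (E : Set ℝ) (I : Set ℝ) : Prop :=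
  ∃ c : ℝ, ∀ᵐ u ∂(volume.restrict I), ind E u = c

/-- The quantity `r_τ(E,s)` with finite neighbours `sm < s < sp`. -/
def rtau (d : ℕ) (p τ : ℝ) (E : Set ℝ) (sm s sp : ℝ) : ℝ :=
  (∫ ρ in Set.Ioo (-1 : ℝ) 1, |ρ| * Kbar d p τ ρ)
  - (∫ u in Set.Ioo sm s, ∫ ρ in Set.Ioi (0 : ℝ), |ind E (u + ρ) - ind E u| * Kbar d p τ ρ)
  - (∫ u in Set.Ioo s sp, ∫ ρ in Set.Iio (0 : ℝ), |ind E (u + ρ) - ind E u| * Kbar d p τ ρ)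

/-- The quantity `r_τ(E,s)` with possibly infinite neighbours `sm < s < sp`. -/
def rtauE (d : ℕ) (p τ : ℝ) (E : Set ℝ) (sm : EReal) (s : ℝ) (sp : EReal) : ℝ :=
  (∫ ρ in Set.Ioo (-1 : ℝ) 1, |ρ| * Kbar d p τ ρ)
  - (∫ u in {u : ℝ | sm < (u : EReal) ∧ u < s},
      ∫ ρ in Set.Ioi (0 : ℝ), |ind E (u + ρ) - ind E u| * Kbar d p τ ρ)
  - (∫ u in {u : ℝ | s < u ∧ (u : EReal) < sp},
      ∫ ρ in Set.Iio (0 : ℝ), |ind E (u + ρ) - ind E u| * Kbar d p τ ρ)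

/-- `(E,B)` is a one-dimensional set of locally finite perimeter: `B` is a closed, locally
finite set of jump points of `χ_E`. -/
def IsOneDPerimeterSet (E B : Set ℝ) : Prop :=
  MeasurableSet E ∧ IsClosed B ∧ (∀ K : Set ℝ, IsCompact K → (B ∩ K).Finite) ∧
  (∀ a b : ℝ, a < b → Set.Ioo a b ∩ B = ∅ → AEConstOn E (Set.Ioo a b)) ∧
  (∀ s ∈ B, ∀ a b : ℝ, a < s → s < b →
    Set.Ioo a s ∩ B = ∅ → Set.Ioo s b ∩ B = ∅ →
    ∀ c₁ c₂ : ℝ,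
      (∀ᵐ u ∂(volume.restrict (Set.Ioo a s)), ind E u = c₁) →
      (∀ᵐ u ∂(volume.restrict (Set.Ioo s b)), ind E u = c₂) →
      c₁ ≠ c₂)

/-- The successor `s⁺` of `s` in `B` (`+∞` if none). -/
def succPt (B : Set ℝ) (s : ℝ) : EReal :=
  sInf ((fun t : ℝ => (t : EReal)) '' {t | t ∈ B ∧ s < t})

/-- The predecessor `s⁻` of `s` in `B` (`−∞` if none). -/
def predPt (B : Set ℝ) (s : ℝ) : EReal :=
  sSup ((fun t : ℝ => (t : EReal)) '' {t | t ∈ B ∧ t < s})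

/-- `r_τ(E,s)` computed with the neighbours of `s` in the boundary `B`. -/
def rPt (d : ℕ) (p τ : ℝ) (E B : Set ℝ) (s : ℝ) : ℝ :=
  rtauE d p τ E (predPt B s) s (succPt B s)

/-- `x^{-q}` for `x : EReal`, with the convention that it vanishes at `x = +∞`. -/
def powNegE (q : ℝ) (x : EReal) : ℝ :=
  if x = ⊤ then 0 else x.toReal ^ (-q)

/-- The kernel `K̄(ρ) = |ρ|^{d−1} max(1,|ρ|)^{−p}` at the critical coupling. -/
def Kbar0 (d : ℕ) (p : ℝ) (ρ : ℝ) : ℝ :=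
  |ρ| ^ ((d : ℝ) - 1) * (max 1 |ρ|) ^ (-p)

lemma ind_nonneg (E : Set ℝ) (x : ℝ) : 0 ≤ ind E x :=
  Set.indicator_nonneg (fun _ _ => zero_le_one) x

lemma ind_le_one (E : Set ℝ) (x : ℝ) : ind E x ≤ 1 := by
  unfold ind; by_cases h : x ∈ E <;> simp [h]

lemma abs_ind_sub_le (E : Set ℝ) (x y : ℝ) : |ind E x - ind E y| ≤ 1 := by
  have h1 := ind_nonneg E x; have h2 := ind_nonneg E y
  have h3 := ind_le_one E x; have h4 := ind_le_one E y
  rw [abs_sub_le_iff]; constructor <;> linarith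

lemma ind_measurable {E : Set ℝ} (hE : MeasurableSet E) : Measurable (ind E) :=
  measurable_const.indicator hE

lemma Kbar0_nonneg (d : ℕ) (p : ℝ) (ρ : ℝ) : 0 ≤ Kbar0 d p ρ := by
  unfold Kbar0; positivity

lemma Kbar0_measurable (d : ℕ) (p : ℝ) : Measurable (Kbar0 d p) := by
  unfold Kbar0; fun_prop

lemma keyPos (d : ℕ) (p : ℝ) (E : Set ℝ) (a b : ℝ) (c : ℝ)
    (hc : ∀ᵐ u ∂(volume.restrict (Set.Ioo a b)), ind E u = c) :
    ∫⁻ u in Set.Ioo a b, ∫⁻ ρ in Set.Ioi (0:ℝ),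
        ENNReal.ofReal (|ind E (u + ρ) - ind E u| * Kbar0 d p ρ)
      ≤ ∫⁻ ρ in Set.Ioi (0:ℝ), ENNReal.ofReal (|ρ| * Kbar0 d p ρ) := by
  have hc' : ∀ᵐ x ∂(volume : Measure ℝ), x ∈ Set.Ioo a b → ind E x = c :=
    (ae_restrict_iff' measurableSet_Ioo).mp hc
  set W : ℝ → ℝ → ℝ≥0∞ := fun u ρ => if b - u ≤ ρ then ENNReal.ofReal (Kbar0 d p ρ) else 0
    with hW
  have step1 : ∫⁻ u in Set.Ioo a b, ∫⁻ ρ in Set.Ioi (0:ℝ),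
      ENNReal.ofReal (|ind E (u + ρ) - ind E u| * Kbar0 d p ρ)
      ≤ ∫⁻ u in Set.Ioo a b, ∫⁻ ρ in Set.Ioi (0:ℝ), W u ρ := by
    refine lintegral_mono_ae ?_
    filter_upwards [hc, ae_restrict_mem measurableSet_Ioo] with u hu humem
    have hρae : ∀ᵐ ρ ∂(volume : Measure ℝ), (u + ρ ∈ Set.Ioo a b → ind E (u + ρ) = c) :=
      ((measurePreserving_add_left volume u).quasiMeasurePreserving.tendsto_ae).eventually hc'
    refine lintegral_mono_ae ?_
    filter_upwards [ae_restrict_of_ae hρae, ae_restrict_mem measurableSet_Ioi] with ρ hρ hρpos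
    by_cases hcase : b - u ≤ ρ
    · simp only [hW, hcase, if_true]
      refine ENNReal.ofReal_le_ofReal ?_
      calc |ind E (u + ρ) - ind E u| * Kbar0 d p ρ
          ≤ 1 * Kbar0 d p ρ :=
            mul_le_mul_of_nonneg_right (abs_ind_sub_le E _ _) (Kbar0_nonneg d p ρ)
        _ = Kbar0 d p ρ := one_mul _
    · push_neg at hcase
      have hρ0 : (0:ℝ) < ρ := hρpos
      have hmem : u + ρ ∈ Set.Ioo a b := ⟨by linarith [humem.1], by linarith⟩
      rw [hρ hmem, hu, sub_self, abs_zero, zero_mul]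
      simp
  refine step1.trans ?_
  have hWmeas : AEMeasurable (Function.uncurry W)
      ((volume.restrict (Set.Ioo a b)).prod (volume.restrict (Set.Ioi (0:ℝ)))) := by
    refine Measurable.aemeasurable ?_
    refine Measurable.ite ?_ ?_ measurable_const
    · exact measurableSet_le (measurable_const.sub measurable_fst) measurable_snd
    · exact ENNReal.measurable_ofReal.comp ((Kbar0_measurable d p).comp measurable_snd)
  rw [lintegral_lintegral_swap hWmeas]
  refine lintegral_mono_ae ?_
  filter_upwards [ae_restrict_mem measurableSet_Ioi] with ρ hρ
  have hρ0 : (0:ℝ) < ρ := hρ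
  have hWind : ∀ u : ℝ, W u ρ = Set.indicator (Set.Ici (b - ρ))
      (fun _ => ENNReal.ofReal (Kbar0 d p ρ)) u := by
    intro u
    by_cases h : b - u ≤ ρ
    · rw [Set.indicator_of_mem (by simp only [Set.mem_Ici]; linarith)]
      simp only [hW]; rw [if_pos h]
    · rw [Set.indicator_of_notMem (by simp only [Set.mem_Ici]; intro hh; exact h (by linarith))]
      simp only [hW]; rw [if_neg h]
  calc ∫⁻ u in Set.Ioo a b, W u ρ
      = ∫⁻ u in Set.Ioo a b, Set.indicator (Set.Ici (b - ρ))
          (fun _ => ENNReal.ofReal (Kbar0 d p ρ)) u := by simp_rw [hWind]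
    _ = ∫⁻ _ in Set.Ici (b - ρ), ENNReal.ofReal (Kbar0 d p ρ)
          ∂(volume.restrict (Set.Ioo a b)) := lintegral_indicator measurableSet_Ici _
    _ = ENNReal.ofReal (Kbar0 d p ρ) * (volume.restrict (Set.Ioo a b)) (Set.Ici (b - ρ)) :=
          setLIntegral_const _ _
    _ ≤ ENNReal.ofReal (Kbar0 d p ρ) * ENNReal.ofReal ρ := by
          refine mul_le_mul_right ?_ _
          rw [Measure.restrict_apply measurableSet_Ici]
          calc volume (Set.Ici (b - ρ) ∩ Set.Ioo a b)
              ≤ volume (Set.Ico (b - ρ) b) :=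
                measure_mono (fun x hx => Set.mem_Ico.mpr ⟨hx.1, hx.2.2⟩)
            _ = ENNReal.ofReal ρ := by rw [Real.volume_Ico, show b - (b - ρ) = ρ by ring]
    _ = ENNReal.ofReal (|ρ| * Kbar0 d p ρ) := by
          rw [← ENNReal.ofReal_mul (Kbar0_nonneg d p ρ), mul_comm, abs_of_pos hρ0]

lemma keyNeg (d : ℕ) (p : ℝ) (E : Set ℝ) (a b : ℝ) (c : ℝ)
    (hc : ∀ᵐ u ∂(volume.restrict (Set.Ioo a b)), ind E u = c) :
    ∫⁻ u in Set.Ioo a b, ∫⁻ ρ in Set.Iio (0:ℝ),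
        ENNReal.ofReal (|ind E (u + ρ) - ind E u| * Kbar0 d p ρ)
      ≤ ∫⁻ ρ in Set.Iio (0:ℝ), ENNReal.ofReal (|ρ| * Kbar0 d p ρ) := by
  have hc' : ∀ᵐ x ∂(volume : Measure ℝ), x ∈ Set.Ioo a b → ind E x = c :=
    (ae_restrict_iff' measurableSet_Ioo).mp hc
  set W : ℝ → ℝ → ℝ≥0∞ := fun u ρ => if ρ ≤ a - u then ENNReal.ofReal (Kbar0 d p ρ) else 0
    with hW
  have step1 : ∫⁻ u in Set.Ioo a b, ∫⁻ ρ in Set.Iio (0:ℝ),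
      ENNReal.ofReal (|ind E (u + ρ) - ind E u| * Kbar0 d p ρ)
      ≤ ∫⁻ u in Set.Ioo a b, ∫⁻ ρ in Set.Iio (0:ℝ), W u ρ := by
    refine lintegral_mono_ae ?_
    filter_upwards [hc, ae_restrict_mem measurableSet_Ioo] with u hu humem
    have hρae : ∀ᵐ ρ ∂(volume : Measure ℝ), (u + ρ ∈ Set.Ioo a b → ind E (u + ρ) = c) :=
      ((measurePreserving_add_left volume u).quasiMeasurePreserving.tendsto_ae).eventually hc'
    refine lintegral_mono_ae ?_
    filter_upwards [ae_restrict_of_ae hρae, ae_restrict_mem measurableSet_Iio] with ρ hρ hρneg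
    by_cases hcase : ρ ≤ a - u
    · simp only [hW]; rw [if_pos hcase]
      refine ENNReal.ofReal_le_ofReal ?_
      calc |ind E (u + ρ) - ind E u| * Kbar0 d p ρ
          ≤ 1 * Kbar0 d p ρ :=
            mul_le_mul_of_nonneg_right (abs_ind_sub_le E _ _) (Kbar0_nonneg d p ρ)
        _ = Kbar0 d p ρ := one_mul _
    · push_neg at hcase
      have hρ0 : ρ < (0:ℝ) := hρneg
      have hmem : u + ρ ∈ Set.Ioo a b := ⟨by linarith, by linarith [humem.2]⟩
      rw [hρ hmem, hu, sub_self, abs_zero, zero_mul]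
      simp
  refine step1.trans ?_
  have hWmeas : AEMeasurable (Function.uncurry W)
      ((volume.restrict (Set.Ioo a b)).prod (volume.restrict (Set.Iio (0:ℝ)))) := by
    refine Measurable.aemeasurable ?_
    refine Measurable.ite ?_ ?_ measurable_const
    · exact measurableSet_le measurable_snd (measurable_const.sub measurable_fst)
    · exact ENNReal.measurable_ofReal.comp ((Kbar0_measurable d p).comp measurable_snd)
  rw [lintegral_lintegral_swap hWmeas]
  refine lintegral_mono_ae ?_
  filter_upwards [ae_restrict_mem measurableSet_Iio] with ρ hρ
  have hρ0 : ρ < (0:ℝ) := hρ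
  have hWind : ∀ u : ℝ, W u ρ = Set.indicator (Set.Iic (a - ρ))
      (fun _ => ENNReal.ofReal (Kbar0 d p ρ)) u := by
    intro u
    by_cases h : ρ ≤ a - u
    · rw [Set.indicator_of_mem (by simp only [Set.mem_Iic]; linarith)]
      simp only [hW]; rw [if_pos h]
    · rw [Set.indicator_of_notMem (by simp only [Set.mem_Iic]; intro hh; exact h (by linarith))]
      simp only [hW]; rw [if_neg h]
  calc ∫⁻ u in Set.Ioo a b, W u ρ
      = ∫⁻ u in Set.Ioo a b, Set.indicator (Set.Iic (a - ρ))
          (fun _ => ENNReal.ofReal (Kbar0 d p ρ)) u := by simp_rw [hWind]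
    _ = ∫⁻ _ in Set.Iic (a - ρ), ENNReal.ofReal (Kbar0 d p ρ)
          ∂(volume.restrict (Set.Ioo a b)) := lintegral_indicator measurableSet_Iic _
    _ = ENNReal.ofReal (Kbar0 d p ρ) * (volume.restrict (Set.Ioo a b)) (Set.Iic (a - ρ)) :=
          setLIntegral_const _ _
    _ ≤ ENNReal.ofReal (Kbar0 d p ρ) * ENNReal.ofReal (-ρ) := by
          refine mul_le_mul_right ?_ _
          rw [Measure.restrict_apply measurableSet_Iic]
          calc volume (Set.Iic (a - ρ) ∩ Set.Ioo a b)
              ≤ volume (Set.Ioc a (a - ρ)) :=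
                measure_mono (fun x hx => Set.mem_Ioc.mpr ⟨hx.2.1, hx.1⟩)
            _ = ENNReal.ofReal (-ρ) := by rw [Real.volume_Ioc, show a - ρ - a = -ρ by ring]
    _ = ENNReal.ofReal (|ρ| * Kbar0 d p ρ) := by
          rw [← ENNReal.ofReal_mul (Kbar0_nonneg d p ρ), mul_comm, abs_of_neg hρ0]


lemma Kbar0_abs_mul_integrable (d : ℕ) (p : ℝ) (hp : (d : ℝ) + 1 < p) :
    Integrable (fun ρ : ℝ => |ρ| * Kbar0 d p ρ) := by
  have hr : (Module.finrank ℝ ℝ : ℝ) < p - d := by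
    simp only [Module.finrank_self, Nat.cast_one]; linarith
  have hbase : Integrable (fun x : ℝ => (1 + ‖x‖) ^ (-(p - (d:ℝ)))) (volume) :=
    integrable_one_add_norm hr
  refine Integrable.mono' (hbase.const_mul ((2:ℝ) ^ (p - (d:ℝ)))) ?_ (ae_of_all _ ?_)
  · exact (measurable_abs.mul (Kbar0_measurable d p)).aestronglyMeasurable
  · intro ρ
    set m := max 1 |ρ| with hm
    have hm1 : (1:ℝ) ≤ m := le_max_left _ _
    have hm0 : (0:ℝ) < m := lt_of_lt_of_le one_pos hm1
    have hnn : 0 ≤ |ρ| * Kbar0 d p ρ := mul_nonneg (abs_nonneg _) (Kbar0_nonneg d p ρ)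
    rw [Real.norm_eq_abs, abs_of_nonneg hnn]
    have h1 : |ρ| * Kbar0 d p ρ = (|ρ| * |ρ| ^ ((d:ℝ) - 1)) * m ^ (-p) := by
      unfold Kbar0; rw [hm]; ring
    have h2 : |ρ| * |ρ| ^ ((d:ℝ) - 1) ≤ m ^ (d:ℝ) := by
      rcases eq_or_ne ρ 0 with h | h
      · rw [h]; simp only [abs_zero, zero_mul]; positivity
      · have habs : (0:ℝ) < |ρ| := abs_pos.mpr h
        have e1 : |ρ| ^ ((1:ℝ) + ((d:ℝ) - 1)) = |ρ| ^ (1:ℝ) * |ρ| ^ ((d:ℝ) - 1) :=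
          Real.rpow_add habs 1 _
        have e2 : |ρ| * |ρ| ^ ((d:ℝ) - 1) = |ρ| ^ (d:ℝ) := by
          rw [show (1:ℝ) + ((d:ℝ) - 1) = (d:ℝ) by ring] at e1
          rw [e1, Real.rpow_one]
        rw [e2]
        exact Real.rpow_le_rpow (abs_nonneg _) (le_max_right _ _) (by positivity)
    have h3 : m ^ (d:ℝ) * m ^ (-p) = m ^ ((d:ℝ) - p) := by
      rw [← Real.rpow_add hm0]; ring_nf
    have h4 : m ^ ((d:ℝ) - p) ≤ 2 ^ (p - (d:ℝ)) * (1 + |ρ|) ^ (-(p - (d:ℝ))) := by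
      have habsle : |ρ| ≤ m := le_max_right _ _
      have hle : (1 + |ρ|) / 2 ≤ m := by linarith
      have h5 : m ^ ((d:ℝ) - p) ≤ ((1 + |ρ|) / 2) ^ ((d:ℝ) - p) :=
        Real.rpow_le_rpow_of_nonpos (by positivity) hle (by linarith)
      refine h5.trans (le_of_eq ?_)
      rw [Real.div_rpow (by positivity) (by norm_num : (0:ℝ) ≤ 2)]
      rw [div_eq_mul_inv, ← Real.rpow_neg (by norm_num : (0:ℝ) ≤ 2)]
      rw [show -((d:ℝ) - p) = p - (d:ℝ) by ring, show -(p - (d:ℝ)) = (d:ℝ) - p by ring]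
      ring
    calc |ρ| * Kbar0 d p ρ = (|ρ| * |ρ| ^ ((d:ℝ) - 1)) * m ^ (-p) := h1
      _ ≤ m ^ (d:ℝ) * m ^ (-p) :=
          mul_le_mul_of_nonneg_right h2 (Real.rpow_nonneg hm0.le _)
      _ = m ^ ((d:ℝ) - p) := h3
      _ ≤ 2 ^ (p - (d:ℝ)) * (1 + |ρ|) ^ (-(p - (d:ℝ))) := h4
      _ = 2 ^ (p - (d:ℝ)) * (1 + ‖ρ‖) ^ (-(p - (d:ℝ))) := by rw [Real.norm_eq_abs]

theorem statement4' (d : ℕ) (hd : 1 ≤ d) (p : ℝ) (hp : (d : ℝ) + 1 < p)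
    (E : Set ℝ) (hE : MeasurableSet E) (sm s sp : ℝ) (h1 : sm < s) (h2 : s < sp)
    (hc1 : ∃ c : ℝ, ∀ᵐ u ∂(volume.restrict (Set.Ioo sm s)), ind E u = c)
    (hc2 : ∃ c : ℝ, ∀ᵐ u ∂(volume.restrict (Set.Ioo s sp)), ind E u = c) :
    (∫ u in Set.Ioo sm s, ∫ ρ in Set.Ioi (0 : ℝ), |ind E (u + ρ) - ind E u| * Kbar0 d p ρ)
    + (∫ u in Set.Ioo s sp, ∫ ρ in Set.Iio (0 : ℝ), |ind E (u + ρ) - ind E u| * Kbar0 d p ρ)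
    ≤ ∫ ρ : ℝ, |ρ| * Kbar0 d p ρ := by
  obtain ⟨c₁, hc1⟩ := hc1
  obtain ⟨c₂, hc2⟩ := hc2
  have hFnn : ∀ u ρ : ℝ, 0 ≤ |ind E (u + ρ) - ind E u| * Kbar0 d p ρ :=
    fun u ρ => mul_nonneg (abs_nonneg _) (Kbar0_nonneg d p ρ)
  have h0 : ∀ ρ : ℝ, 0 ≤ |ρ| * Kbar0 d p ρ :=
    fun ρ => mul_nonneg (abs_nonneg _) (Kbar0_nonneg d p ρ)
  have hFm : StronglyMeasurable
      (fun q : ℝ × ℝ => |ind E (q.1 + q.2) - ind E q.1| * Kbar0 d p q.2) := by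
    refine Measurable.stronglyMeasurable ?_
    exact (((ind_measurable hE).comp (measurable_fst.add measurable_snd)).sub
      ((ind_measurable hE).comp measurable_fst)).abs.mul
      ((Kbar0_measurable d p).comp measurable_snd)
  have hpoint : ∀ (S : Set ℝ) (u : ℝ),
      ENNReal.ofReal (∫ ρ in S, |ind E (u + ρ) - ind E u| * Kbar0 d p ρ)
        ≤ ∫⁻ ρ in S, ENNReal.ofReal (|ind E (u + ρ) - ind E u| * Kbar0 d p ρ) := by
    intro S u
    by_cases h : IntegrableOn (fun ρ => |ind E (u + ρ) - ind E u| * Kbar0 d p ρ) S volume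
    · exact le_of_eq (ofReal_integral_eq_lintegral_ofReal h (ae_of_all _ fun ρ => hFnn u ρ))
    · rw [integral_undef h]; simp
  set A1 : ℝ≥0∞ := ∫⁻ ρ in Set.Ioi (0:ℝ), ENNReal.ofReal (|ρ| * Kbar0 d p ρ) with hA1def
  set A2 : ℝ≥0∞ := ∫⁻ ρ in Set.Iio (0:ℝ), ENNReal.ofReal (|ρ| * Kbar0 d p ρ) with hA2def
  set A : ℝ≥0∞ := ∫⁻ ρ : ℝ, ENNReal.ofReal (|ρ| * Kbar0 d p ρ) with hAdef
  have hInt := Kbar0_abs_mul_integrable d p hp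
  have hAfin : A < ⊤ := by
    have hfi := hInt.hasFiniteIntegral
    rwa [hasFiniteIntegral_iff_ofReal (ae_of_all _ h0)] at hfi
  have hA1le : A1 ≤ A := setLIntegral_le_lintegral _ _
  have hA2le : A2 ≤ A := setLIntegral_le_lintegral _ _
  have hA12 : A1 + A2 ≤ A := by
    have hdisj : Disjoint (Set.Ioi (0:ℝ)) (Set.Iio 0) :=
      Set.disjoint_left.mpr fun x hx hx' => absurd (show x < 0 from hx') (not_lt.mpr (le_of_lt (show (0:ℝ) < x from hx)))
    calc A1 + A2
        = ∫⁻ ρ in Set.Ioi (0:ℝ) ∪ Set.Iio 0, ENNReal.ofReal (|ρ| * Kbar0 d p ρ) :=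
          (lintegral_union measurableSet_Iio hdisj).symm
      _ ≤ A := setLIntegral_le_lintegral _ _
  have hL1A : (∫⁻ u in Set.Ioo sm s, ∫⁻ ρ in Set.Ioi (0:ℝ),
      ENNReal.ofReal (|ind E (u + ρ) - ind E u| * Kbar0 d p ρ)) ≤ A1 :=
    keyPos d p E sm s c₁ hc1
  have hL2A : (∫⁻ u in Set.Ioo s sp, ∫⁻ ρ in Set.Iio (0:ℝ),
      ENNReal.ofReal (|ind E (u + ρ) - ind E u| * Kbar0 d p ρ)) ≤ A2 :=
    keyNeg d p E s sp c₂ hc2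
  have hg1m : AEStronglyMeasurable
      (fun u => ∫ ρ in Set.Ioi (0:ℝ), |ind E (u + ρ) - ind E u| * Kbar0 d p ρ)
      (volume.restrict (Set.Ioo sm s)) :=
    (hFm.integral_prod_right' (ν := volume.restrict (Set.Ioi (0:ℝ)))).aestronglyMeasurable
  have hg2m : AEStronglyMeasurable
      (fun u => ∫ ρ in Set.Iio (0:ℝ), |ind E (u + ρ) - ind E u| * Kbar0 d p ρ)
      (volume.restrict (Set.Ioo s sp)) :=
    (hFm.integral_prod_right' (ν := volume.restrict (Set.Iio (0:ℝ)))).aestronglyMeasurable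
  have hterm1 : (∫ u in Set.Ioo sm s, ∫ ρ in Set.Ioi (0:ℝ),
        |ind E (u + ρ) - ind E u| * Kbar0 d p ρ)
      = (∫⁻ u in Set.Ioo sm s, ENNReal.ofReal (∫ ρ in Set.Ioi (0:ℝ),
          |ind E (u + ρ) - ind E u| * Kbar0 d p ρ)).toReal :=
    integral_eq_lintegral_of_nonneg_ae
      (ae_of_all _ fun u => integral_nonneg fun ρ => hFnn u ρ) hg1m
  have hterm2 : (∫ u in Set.Ioo s sp, ∫ ρ in Set.Iio (0:ℝ),
        |ind E (u + ρ) - ind E u| * Kbar0 d p ρ)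
      = (∫⁻ u in Set.Ioo s sp, ENNReal.ofReal (∫ ρ in Set.Iio (0:ℝ),
          |ind E (u + ρ) - ind E u| * Kbar0 d p ρ)).toReal :=
    integral_eq_lintegral_of_nonneg_ae
      (ae_of_all _ fun u => integral_nonneg fun ρ => hFnn u ρ) hg2m
  have hb1 : (∫⁻ u in Set.Ioo sm s, ENNReal.ofReal (∫ ρ in Set.Ioi (0:ℝ),
      |ind E (u + ρ) - ind E u| * Kbar0 d p ρ)) ≤ A1 :=
    (lintegral_mono fun u => hpoint _ u).trans hL1A
  have hb2 : (∫⁻ u in Set.Ioo s sp, ENNReal.ofReal (∫ ρ in Set.Iio (0:ℝ),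
      |ind E (u + ρ) - ind E u| * Kbar0 d p ρ)) ≤ A2 :=
    (lintegral_mono fun u => hpoint _ u).trans hL2A
  have hA1fin : A1 ≠ ⊤ := (lt_of_le_of_lt hA1le hAfin).ne
  have hA2fin : A2 ≠ ⊤ := (lt_of_le_of_lt hA2le hAfin).ne
  have hRHS : (∫ ρ : ℝ, |ρ| * Kbar0 d p ρ) = A.toReal :=
    integral_eq_lintegral_of_nonneg_ae (ae_of_all _ h0) hInt.1
  rw [hterm1, hterm2, hRHS]
  calc (∫⁻ u in Set.Ioo sm s, ENNReal.ofReal (∫ ρ in Set.Ioi (0:ℝ),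
          |ind E (u + ρ) - ind E u| * Kbar0 d p ρ)).toReal
        + (∫⁻ u in Set.Ioo s sp, ENNReal.ofReal (∫ ρ in Set.Iio (0:ℝ),
          |ind E (u + ρ) - ind E u| * Kbar0 d p ρ)).toReal
      ≤ A1.toReal + A2.toReal :=
        add_le_add (ENNReal.toReal_mono hA1fin hb1) (ENNReal.toReal_mono hA2fin hb2)
    _ = (A1 + A2).toReal := (ENNReal.toReal_add hA1fin hA2fin).symm
    _ ≤ A.toReal := ENNReal.toReal_mono hAfin.ne hA12

/-- Nonnegativity of the one-dimensional energy defect at the critical coupling `J_c`. -/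
theorem statement4 (d : ℕ) (hd : 1 ≤ d) (p : ℝ) (hp : (d : ℝ) + 1 < p)
    (E : Set ℝ) (hE : MeasurableSet E) (sm s sp : ℝ) (h1 : sm < s) (h2 : s < sp)
    (hc1 : AEConstOn E (Set.Ioo sm s)) (hc2 : AEConstOn E (Set.Ioo s sp)) :
    (∫ u in Set.Ioo sm s, ∫ ρ in Set.Ioi (0 : ℝ), |ind E (u + ρ) - ind E u| * Kbar0 d p ρ)
    + (∫ u in Set.Ioo s sp, ∫ ρ in Set.Iio (0 : ℝ), |ind E (u + ρ) - ind E u| * Kbar0 d p ρ)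
    ≤ ∫ ρ : ℝ, |ρ| * Kbar0 d p ρ := by
  exact statement4' d hd p hp E hE sm s sp h1 h2 hc1 hc2

end
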